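/- arXiv:2605.01760 — 2 statements merged into one kernel-verified Lean document; each statement's English description precedes it below -/
import Mathlib

section
/- For every finite simple graph G, the fourth power sum of the complex roots of the Laplacian matching polynomial satisfies p_4(G) = A_4(G) + 4·A_3(G) + 2·A_2(G) + 4·B(G) − 2·|E(G)|. -/
open Polynomial Finset

namespace LMRIV

open scoped Classical

variable {V : Type*}

/-- The degree of a vertex. -/
noncomputable def deg [Fintype V] (G : SimpleGraph V) (v : V) : ℕ :=
  (univ.filter fun w => G.Adj v w).card

/-- The finset of edges of `G`. -/
noncomputable def edges [Fintype V] (G : SimpleGraph V) : Finset (Sym2 V) :=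
  univ.filter fun e => e ∈ G.edgeSet

/-- A matching: a set of pairwise disjoint edges. -/
def IsMatching (G : SimpleGraph V) (M : Finset (Sym2 V)) : Prop :=
  (↑M : Set (Sym2 V)) ⊆ G.edgeSet ∧
    ∀ e ∈ M, ∀ f ∈ M, e ≠ f → ∀ x : V, x ∈ e → x ∉ f

/-- The finset of all matchings of `G` (including the empty matching). -/
noncomputable def matchings [Fintype V] (G : SimpleGraph V) : Finset (Finset (Sym2 V)) :=
  univ.filter fun M => IsMatching G M

/-- The set of vertices covered by a matching. -/
noncomputable def covered [Fintype V] (M : Finset (Sym2 V)) : Finset V :=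
  univ.filter fun x => ∃ e ∈ M, x ∈ e

/-- The Laplacian matching polynomial of `G`, with coefficients in `R`. -/
noncomputable def LM (R : Type*) [CommRing R] [Fintype V] (G : SimpleGraph V) :
    Polynomial R :=
  ∑ M ∈ matchings G, (-1 : Polynomial R) ^ M.card *
    ∏ v ∈ univ \ covered M, (X - C (deg G v : R))

/-- `p_r(G)`: the sum of the `r`-th powers of the complex roots of `LM_G`. -/
noncomputable def psum [Fintype V] (G : SimpleGraph V) (r : ℕ) : ℂ :=
  (((LM ℂ G).roots).map (· ^ r)).sum

/-- `A_r(G) = Σ_v d_G(v)^r`. -/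
noncomputable def A [Fintype V] (G : SimpleGraph V) (r : ℕ) : ℕ :=
  ∑ v : V, (deg G v) ^ r

/-- `B(G) = Σ_{xy ∈ E(G)} d_G(x) d_G(y)`. -/
noncomputable def B [Fintype V] (G : SimpleGraph V) : ℕ :=
  ∑ e ∈ edges G, Sym2.lift ⟨fun x y => deg G x * deg G y, fun x y => mul_comm _ _⟩ e

/-- `C(G) = Σ_{xy ∈ E(G)} (d_G(x)^2 d_G(y) + d_G(x) d_G(y)^2)`. -/
noncomputable def Csum [Fintype V] (G : SimpleGraph V) : ℕ :=
  ∑ e ∈ edges G,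
    Sym2.lift ⟨fun x y => deg G x ^ 2 * deg G y + deg G x * deg G y ^ 2,
      fun x y => by ring⟩ e

/-- The graph obtained from `G` by adding the edge `uv`. -/
def addEdge (G : SimpleGraph V) (u v : V) : SimpleGraph V :=
  G ⊔ SimpleGraph.fromEdgeSet {s(u, v)}

/-- `S_w = Σ_{x ∈ N_G(w)} d_G(x)`. -/
noncomputable def Ssum [Fintype V] (G : SimpleGraph V) (w : V) : ℕ :=
  ∑ x ∈ univ.filter fun x => G.Adj w x, deg G x

/-- `T_w = Σ_{x ∈ N_G(w)} d_G(x)^2`. -/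
noncomputable def Tsum [Fintype V] (G : SimpleGraph V) (w : V) : ℕ :=
  ∑ x ∈ univ.filter fun x => G.Adj w x, (deg G x) ^ 2

/-- The `r`-th elementary symmetric polynomial of the degree sequence of `G`. -/
noncomputable def esymmDeg [Fintype V] (G : SimpleGraph V) (r : ℕ) : ℕ :=
  ∑ s ∈ univ.powersetCard r, ∏ v ∈ s, deg G v

/-- `φ_2(G)`: the number of 2-matchings of `G`. -/
noncomputable def phi2 [Fintype V] (G : SimpleGraph V) : ℕ :=
  ((matchings G).filter fun M => M.card = 2).card

/-! ### Auxiliary material -/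

section Aux

variable [Fintype V] (G : SimpleGraph V)

lemma mem_edges {e : Sym2 V} : e ∈ edges G ↔ e ∈ G.edgeSet := by
  simp [edges]

lemma adj_of_mem_edges {x y : V} (h : s(x, y) ∈ edges G) : G.Adj x y :=
  (mem_edges G).1 h

/-- The endpoints of an element of `Sym2 V`, as a finset. -/
noncomputable def endpoints (e : Sym2 V) : Finset V := univ.filter (· ∈ e)

lemma endpoints_mk (x y : V) : endpoints (s(x, y)) = {x, y} := by
  ext v; simp [endpoints, Sym2.mem_iff]

lemma card_endpoints {e : Sym2 V} (he : e ∈ edges G) : (endpoints e).card = 2 := by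
  induction e using Sym2.ind with
  | _ x y =>
    have hxy := (adj_of_mem_edges G he).ne
    rw [endpoints_mk, card_insert_of_notMem (by simp [hxy]), card_singleton]

lemma mem_matchings {M : Finset (Sym2 V)} : M ∈ matchings G ↔ IsMatching G M := by
  simp [matchings]

lemma empty_mem_matchings : (∅ : Finset (Sym2 V)) ∈ matchings G := by
  rw [mem_matchings]
  exact ⟨by simp, by simp⟩

lemma edges_of_mem_matchings {M : Finset (Sym2 V)} (hM : M ∈ matchings G) {e : Sym2 V}
    (he : e ∈ M) : e ∈ edges G :=
  (mem_edges G).2 (((mem_matchings G).1 hM).1 he)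

lemma covered_eq_biUnion (M : Finset (Sym2 V)) : covered M = M.biUnion endpoints := by
  ext v
  simp [covered, endpoints, Finset.mem_biUnion]

lemma covered_empty : covered (∅ : Finset (Sym2 V)) = ∅ := by
  simp [covered]

lemma covered_singleton (e : Sym2 V) : covered ({e} : Finset (Sym2 V)) = endpoints e := by
  ext v; simp [covered, endpoints]

lemma card_covered {M : Finset (Sym2 V)} (hM : M ∈ matchings G) :
    (covered M).card = 2 * M.card := by
  rw [covered_eq_biUnion]
  rw [Finset.card_biUnion (by
    intro e he f hf hef
    rw [Function.onFun, Finset.disjoint_left]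
    intro x hx hx'
    have hm := (mem_matchings G).1 hM
    exact hm.2 e he f hf hef x (by simpa [endpoints] using hx)
      (by simpa [endpoints] using hx'))]
  rw [Finset.sum_congr rfl fun e he => card_endpoints G (edges_of_mem_matchings G hM he)]
  rw [Finset.sum_const, smul_eq_mul, mul_comm]

/-- Elementary symmetric function of the degrees over a vertex subset. -/
noncomputable def esymmF (T : Finset V) (k : ℕ) : ℂ :=
  ∑ s ∈ T.powersetCard k, ∏ v ∈ s, (deg G v : ℂ)

lemma esymmF_zero (T : Finset V) : esymmF G T 0 = 1 := by
  simp [esymmF]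

lemma esymmF_eq_zero {T : Finset V} {k : ℕ} (h : T.card < k) : esymmF G T k = 0 := by
  rw [esymmF, Finset.powersetCard_eq_empty.2 h, Finset.sum_empty]

lemma esymmF_one (T : Finset V) : esymmF G T 1 = ∑ v ∈ T, (deg G v : ℂ) := by
  rw [esymmF, Finset.powersetCard_one, Finset.sum_map]
  simp

lemma two_mul_esymmF_two (T : Finset V) :
    2 * esymmF G T 2 = (∑ v ∈ T, (deg G v : ℂ)) ^ 2 - ∑ v ∈ T, (deg G v : ℂ) ^ 2 := by
  induction T using Finset.induction_on with
  | empty =>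
    rw [esymmF, Finset.powersetCard_eq_empty.2 (by simp)]
    simp
  | @insert a T ha ih =>
    have key : esymmF G (insert a T) 2 = esymmF G T 2 + (deg G a : ℂ) * esymmF G T 1 := by
      rw [esymmF, Finset.powersetCard_succ_insert ha 1, Finset.sum_union (by
        rw [Finset.disjoint_left]
        intro s hs hs'
        obtain ⟨t, ht, rfl⟩ := Finset.mem_image.1 hs'
        have hsub := (Finset.mem_powersetCard.1 hs).1
        exact ha (hsub (Finset.mem_insert_self a t)))]
      congr 1
      rw [Finset.sum_image (by
        intro s hs t ht hst
        have has : a ∉ s := fun h => ha ((Finset.mem_powersetCard.1 hs).1 h)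
        have hat : a ∉ t := fun h => ha ((Finset.mem_powersetCard.1 ht).1 h)
        rw [← Finset.erase_insert has, ← Finset.erase_insert hat, hst])]
      rw [esymmF, Finset.mul_sum]
      refine Finset.sum_congr rfl fun s hs => ?_
      have has : a ∉ s := fun h => ha ((Finset.mem_powersetCard.1 hs).1 h)
      rw [Finset.prod_insert has]
    rw [key, Finset.sum_insert ha, Finset.sum_insert ha, esymmF_one]
    linear_combination ih

/-- The product `∏_{v ∈ T} (X - d_v)`. -/
noncomputable def prodT (T : Finset V) : Polynomial ℂ :=
  ∏ v ∈ T, (X - C (deg G v : ℂ))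

lemma monic_prodT (T : Finset V) : (prodT G T).Monic :=
  monic_prod_of_monic _ _ fun v _ => monic_X_sub_C _

lemma natDegree_prodT (T : Finset V) : (prodT G T).natDegree = T.card := by
  rw [prodT, natDegree_prod_of_monic _ _ fun v _ => monic_X_sub_C _]
  simp only [natDegree_X_sub_C, Finset.sum_const, smul_eq_mul, mul_one]

lemma coeff_prodT {T : Finset V} {k : ℕ} (h : k ≤ T.card) :
    (prodT G T).coeff k = (-1 : ℂ) ^ (T.card - k) * esymmF G T (T.card - k) := by
  have hrw : prodT G T
      = ((T.val.map fun v => (deg G v : ℂ)).map fun t => X - C t).prod := by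
    rw [prodT, Multiset.map_map, Finset.prod]
    rfl
  have hcard : Multiset.card (T.val.map fun v => (deg G v : ℂ)) = T.card := by
    simp
  rw [hrw, Multiset.prod_X_sub_C_coeff _ (by rw [hcard]; exact h), hcard,
    Finset.esymm_map_val]
  rfl

lemma LM_eq : LM ℂ G = ∑ M ∈ matchings G,
    (-1 : Polynomial ℂ) ^ M.card * prodT G (univ \ covered M) := rfl

lemma coeff_LM {k : ℕ} (hk : k ≤ Fintype.card V) :
    (LM ℂ G).coeff (Fintype.card V - k) =
      ∑ M ∈ matchings G, (-1 : ℂ) ^ (k + M.card) *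
        (if 2 * M.card ≤ k then esymmF G (univ \ covered M) (k - 2 * M.card) else 0) := by
  rw [LM_eq, finset_sum_coeff]
  refine Finset.sum_congr rfl fun M hM => ?_
  have hcov : (covered M).card = 2 * M.card := card_covered G hM
  have h2m : 2 * M.card ≤ Fintype.card V := by
    rw [← hcov, ← Finset.card_univ]
    exact Finset.card_le_card (Finset.subset_univ _)
  have hTcard : (univ \ covered M).card = Fintype.card V - 2 * M.card := by
    rw [Finset.card_sdiff_of_subset (Finset.subset_univ _), Finset.card_univ, hcov]
  have hC : ((-1 : Polynomial ℂ)) ^ M.card = C ((-1 : ℂ) ^ M.card) := by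
    rw [map_pow, map_neg, map_one]
  rw [hC, coeff_C_mul]
  by_cases hle : 2 * M.card ≤ k
  · have h1 : Fintype.card V - k ≤ (univ \ covered M).card := by
      rw [hTcard]; omega
    rw [coeff_prodT G h1, if_pos hle]
    have h2 : (univ \ covered M).card - (Fintype.card V - k) = k - 2 * M.card := by
      rw [hTcard]; omega
    rw [h2]
    have h4 : (-1 : ℂ) ^ (k - 2 * M.card) = (-1) ^ k := by
      conv_rhs => rw [← Nat.sub_add_cancel hle]
      rw [pow_add, pow_mul, neg_one_sq, one_pow, mul_one]
    rw [h4, pow_add]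
    ring
  · rw [if_neg hle, mul_zero]
    have hlt : (prodT G (univ \ covered M)).natDegree < Fintype.card V - k := by
      rw [natDegree_prodT, hTcard]; omega
    rw [coeff_eq_zero_of_natDegree_lt hlt, mul_zero]

lemma coeff_LM_card : (LM ℂ G).coeff (Fintype.card V) = 1 := by
  have h := coeff_LM G (k := 0) (Nat.zero_le _)
  rw [Nat.sub_zero] at h
  rw [h, Finset.sum_eq_single_of_mem ∅ (empty_mem_matchings G)]
  · simp [covered_empty, esymmF_zero]
  · intro M _ hne
    have : M.card ≠ 0 := by simpa [Finset.card_eq_zero] using hne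
    rw [if_neg (by omega), mul_zero]

lemma natDegree_LM : (LM ℂ G).natDegree = Fintype.card V := by
  apply le_antisymm
  · rw [LM_eq]
    apply natDegree_sum_le_of_forall_le
    intro M _
    apply natDegree_mul_le.trans
    have h1 : ((-1 : Polynomial ℂ) ^ M.card).natDegree = 0 := by
      simp
    rw [h1, natDegree_prodT, zero_add]
    rw [← Finset.card_univ]
    exact Finset.card_le_card (Finset.subset_univ _)
  · exact le_natDegree_of_ne_zero (by rw [coeff_LM_card]; exact one_ne_zero)

lemma monic_LM : (LM ℂ G).Monic := by
  unfold Polynomial.Monic Polynomial.leadingCoeff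
  rw [natDegree_LM, coeff_LM_card]

/-! ### Splitting sums over matchings -/

lemma matchings_filter_zero :
    (matchings G).filter (fun M => M.card = 0) = {(∅ : Finset (Sym2 V))} := by
  ext M
  simp only [Finset.mem_filter, Finset.mem_singleton, Finset.card_eq_zero]
  exact ⟨fun h => h.2, fun h => ⟨h ▸ empty_mem_matchings G, h⟩⟩

lemma sum_matchings_card_one (F : Finset (Sym2 V) → ℂ) :
    ∑ M ∈ (matchings G).filter (fun M => M.card = 1), F M = ∑ e ∈ edges G, F {e} := by
  refine (Finset.sum_bij (fun e _ => ({e} : Finset (Sym2 V))) ?_ ?_ ?_ ?_).symm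
  · intro e he
    simp only [Finset.mem_filter, Finset.card_singleton, and_true]
    rw [mem_matchings]
    constructor
    · intro f hf
      simp only [Finset.coe_singleton, Set.mem_singleton_iff] at hf
      subst hf
      exact (mem_edges G).1 he
    · intro a ha b hb hab
      simp only [Finset.mem_singleton] at ha hb
      subst ha; subst hb
      exact absurd rfl hab
  · intro a _ b _ h
    simpa using h
  · intro M hM
    simp only [Finset.mem_filter] at hM
    obtain ⟨e, rfl⟩ := Finset.card_eq_one.1 hM.2
    exact ⟨e, edges_of_mem_matchings G hM.1 (Finset.mem_singleton_self e), rfl⟩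
  · intro e _; rfl

lemma sum_matchings_split (F : Finset (Sym2 V) → ℂ) :
    ∑ M ∈ matchings G, F M
      = F ∅ + (∑ e ∈ edges G, F {e}) +
        ∑ M ∈ (matchings G).filter (fun M => 2 ≤ M.card), F M := by
  rw [← Finset.sum_filter_add_sum_filter_not (matchings G) (fun M => M.card = 0) F,
    matchings_filter_zero, Finset.sum_singleton, add_assoc]
  congr 1
  rw [← Finset.sum_filter_add_sum_filter_not
    ((matchings G).filter (fun M => ¬ M.card = 0)) (fun M => M.card = 1) F]
  congr 1
  · rw [Finset.filter_filter, ← sum_matchings_card_one G F]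
    congr 1
    ext M
    simp only [Finset.mem_filter]
    constructor
    · rintro ⟨h1, _, h3⟩; exact ⟨h1, h3⟩
    · rintro ⟨h1, h2⟩; exact ⟨h1, by omega, h2⟩
  · rw [Finset.filter_filter]
    congr 1
    ext M
    simp only [Finset.mem_filter]
    constructor
    · rintro ⟨h1, h2, h3⟩; exact ⟨h1, by omega⟩
    · rintro ⟨h1, h2⟩; exact ⟨h1, by omega, by omega⟩

/-- `S1 = Σ_e e_1(degrees off e)`. -/
noncomputable def S1 : ℂ := ∑ e ∈ edges G, esymmF G (univ \ endpoints e) 1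

/-- `S2 = Σ_e e_2(degrees off e)`. -/
noncomputable def S2 : ℂ := ∑ e ∈ edges G, esymmF G (univ \ endpoints e) 2

lemma coeff_LM_one (h : 1 ≤ Fintype.card V) :
    (LM ℂ G).coeff (Fintype.card V - 1) = - esymmF G univ 1 := by
  rw [coeff_LM G h, sum_matchings_split]
  have h1 : ∑ e ∈ edges G, (-1 : ℂ) ^ (1 + ({e} : Finset (Sym2 V)).card) *
      (if 2 * ({e} : Finset (Sym2 V)).card ≤ 1 then
        esymmF G (univ \ covered {e}) (1 - 2 * ({e} : Finset (Sym2 V)).card) else 0) = 0 := by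
    refine Finset.sum_eq_zero fun e _ => ?_
    rw [Finset.card_singleton, if_neg (by omega), mul_zero]
  have h2 : ∑ M ∈ (matchings G).filter (fun M => 2 ≤ M.card), (-1 : ℂ) ^ (1 + M.card) *
      (if 2 * M.card ≤ 1 then esymmF G (univ \ covered M) (1 - 2 * M.card) else 0) = 0 := by
    refine Finset.sum_eq_zero fun M hM => ?_
    simp only [Finset.mem_filter] at hM
    rw [if_neg (by omega), mul_zero]
  rw [h1, h2, add_zero, add_zero]
  simp [covered_empty, esymmF]

lemma coeff_LM_two (h : 2 ≤ Fintype.card V) :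
    (LM ℂ G).coeff (Fintype.card V - 2)
      = esymmF G univ 2 - ((edges G).card : ℂ) := by
  rw [coeff_LM G h, sum_matchings_split]
  have h1 : ∑ e ∈ edges G, (-1 : ℂ) ^ (2 + ({e} : Finset (Sym2 V)).card) *
      (if 2 * ({e} : Finset (Sym2 V)).card ≤ 2 then
        esymmF G (univ \ covered {e}) (2 - 2 * ({e} : Finset (Sym2 V)).card) else 0)
      = - ((edges G).card : ℂ) := by
    have hterm : ∀ e ∈ edges G, (-1 : ℂ) ^ (2 + ({e} : Finset (Sym2 V)).card) *
        (if 2 * ({e} : Finset (Sym2 V)).card ≤ 2 then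
          esymmF G (univ \ covered {e}) (2 - 2 * ({e} : Finset (Sym2 V)).card) else 0)
        = -1 := by
      intro e _
      rw [Finset.card_singleton, if_pos (by omega)]
      norm_num [esymmF_zero]
    rw [Finset.sum_congr rfl hterm, Finset.sum_const, nsmul_eq_mul]
    ring
  have h2 : ∑ M ∈ (matchings G).filter (fun M => 2 ≤ M.card), (-1 : ℂ) ^ (2 + M.card) *
      (if 2 * M.card ≤ 2 then esymmF G (univ \ covered M) (2 - 2 * M.card) else 0) = 0 := by
    refine Finset.sum_eq_zero fun M hM => ?_
    simp only [Finset.mem_filter] at hM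
    rw [if_neg (by omega), mul_zero]
  rw [h1, h2, add_zero]
  have h0 : (-1 : ℂ) ^ (2 + (∅ : Finset (Sym2 V)).card) *
      (if 2 * (∅ : Finset (Sym2 V)).card ≤ 2 then
        esymmF G (univ \ covered ∅) (2 - 2 * (∅ : Finset (Sym2 V)).card) else 0)
      = esymmF G univ 2 := by
    simp only [Finset.card_empty, mul_zero, covered_empty, Finset.sdiff_empty, Nat.sub_zero]
    rw [if_pos (by omega)]
    ring
  rw [h0]
  ring

lemma coeff_LM_three (h : 3 ≤ Fintype.card V) :
    (LM ℂ G).coeff (Fintype.card V - 3) = - esymmF G univ 3 + S1 G := by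
  rw [coeff_LM G h, sum_matchings_split]
  have h1 : ∑ e ∈ edges G, (-1 : ℂ) ^ (3 + ({e} : Finset (Sym2 V)).card) *
      (if 2 * ({e} : Finset (Sym2 V)).card ≤ 3 then
        esymmF G (univ \ covered {e}) (3 - 2 * ({e} : Finset (Sym2 V)).card) else 0)
      = S1 G := by
    rw [S1]
    refine Finset.sum_congr rfl fun e _ => ?_
    rw [Finset.card_singleton, if_pos (by omega), covered_singleton]
    norm_num
  have h2 : ∑ M ∈ (matchings G).filter (fun M => 2 ≤ M.card), (-1 : ℂ) ^ (3 + M.card) *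
      (if 2 * M.card ≤ 3 then esymmF G (univ \ covered M) (3 - 2 * M.card) else 0) = 0 := by
    refine Finset.sum_eq_zero fun M hM => ?_
    simp only [Finset.mem_filter] at hM
    rw [if_neg (by omega), mul_zero]
  rw [h1, h2, add_zero]
  have h0 : (-1 : ℂ) ^ (3 + (∅ : Finset (Sym2 V)).card) *
      (if 2 * (∅ : Finset (Sym2 V)).card ≤ 3 then
        esymmF G (univ \ covered ∅) (3 - 2 * (∅ : Finset (Sym2 V)).card) else 0)
      = - esymmF G univ 3 := by
    simp only [Finset.card_empty, mul_zero, Nat.le_refl, if_pos, add_zero, covered_empty,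
      Finset.sdiff_empty, Nat.sub_zero]
    rw [if_pos (by omega)]
    ring
  rw [h0]

lemma coeff_LM_four (h : 4 ≤ Fintype.card V) :
    (LM ℂ G).coeff (Fintype.card V - 4)
      = esymmF G univ 4 - S2 G + (phi2 G : ℂ) := by
  rw [coeff_LM G h, sum_matchings_split]
  have h1 : ∑ e ∈ edges G, (-1 : ℂ) ^ (4 + ({e} : Finset (Sym2 V)).card) *
      (if 2 * ({e} : Finset (Sym2 V)).card ≤ 4 then
        esymmF G (univ \ covered {e}) (4 - 2 * ({e} : Finset (Sym2 V)).card) else 0)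
      = - S2 G := by
    rw [S2, ← Finset.sum_neg_distrib]
    refine Finset.sum_congr rfl fun e _ => ?_
    rw [Finset.card_singleton, if_pos (by omega), covered_singleton]
    norm_num
  have h2 : ∑ M ∈ (matchings G).filter (fun M => 2 ≤ M.card), (-1 : ℂ) ^ (4 + M.card) *
      (if 2 * M.card ≤ 4 then esymmF G (univ \ covered M) (4 - 2 * M.card) else 0)
      = (phi2 G : ℂ) := by
    have hterm : ∀ M ∈ (matchings G).filter (fun M => 2 ≤ M.card),
        (-1 : ℂ) ^ (4 + M.card) *
          (if 2 * M.card ≤ 4 then esymmF G (univ \ covered M) (4 - 2 * M.card) else 0)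
        = if M.card = 2 then 1 else 0 := by
      intro M hM
      simp only [Finset.mem_filter] at hM
      by_cases hc : M.card = 2
      · rw [if_pos hc, hc, if_pos (by omega)]
        norm_num [esymmF_zero]
      · rw [if_neg hc, if_neg (by omega), mul_zero]
    rw [Finset.sum_congr rfl hterm, Finset.sum_boole, Finset.filter_filter, phi2]
    congr 2
    ext M
    simp only [Finset.mem_filter]
    constructor
    · rintro ⟨h1, _, h3⟩; exact ⟨h1, h3⟩
    · rintro ⟨h1, h2⟩; exact ⟨h1, by omega, h2⟩
  rw [h1, h2]
  have h0 : (-1 : ℂ) ^ (4 + (∅ : Finset (Sym2 V)).card) *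
      (if 2 * (∅ : Finset (Sym2 V)).card ≤ 4 then
        esymmF G (univ \ covered ∅) (4 - 2 * (∅ : Finset (Sym2 V)).card) else 0)
      = esymmF G univ 4 := by
    simp only [Finset.card_empty, mul_zero, covered_empty, Finset.sdiff_empty, Nat.sub_zero]
    rw [if_pos (by omega)]
    ring
  rw [h0]
  ring

/-! ### Roots of `LM` -/

lemma roots_card : Multiset.card (LM ℂ G).roots = Fintype.card V := by
  rw [← natDegree_LM G]
  exact Polynomial.splits_iff_card_roots.1 (IsAlgClosed.splits _)

lemma esymm_roots {k : ℕ} (hk : k ≤ Fintype.card V) :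
    (LM ℂ G).roots.esymm k = (-1 : ℂ) ^ k * (LM ℂ G).coeff (Fintype.card V - k) := by
  have hroots : Multiset.card (LM ℂ G).roots = (LM ℂ G).natDegree := by
    rw [roots_card, natDegree_LM]
  have h2 : Fintype.card V - k ≤ (LM ℂ G).natDegree := by
    rw [natDegree_LM]; omega
  have h := Polynomial.coeff_eq_esymm_roots_of_card hroots h2
  rw [natDegree_LM, (monic_LM G).leadingCoeff, one_mul] at h
  have h3 : Fintype.card V - (Fintype.card V - k) = k := by omega
  rw [h3] at h
  rw [h, ← mul_assoc, ← pow_add]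
  have h4 : (-1 : ℂ) ^ (k + k) = 1 := by
    rw [← two_mul, pow_mul, neg_one_sq, one_pow]
  rw [h4, one_mul]

lemma esymm_roots_high {k : ℕ} (hk : Fintype.card V < k) :
    (LM ℂ G).roots.esymm k = 0 := by
  rw [Multiset.esymm, Multiset.powersetCard_eq_empty k (by rw [roots_card]; exact hk)]
  simp

lemma esymmF_univ_high {k : ℕ} (hk : Fintype.card V < k) : esymmF G univ k = 0 :=
  esymmF_eq_zero G (by rwa [Finset.card_univ])

lemma edges_eq_empty (h : Fintype.card V < 2) : edges G = ∅ := by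
  rw [Finset.eq_empty_iff_forall_notMem]
  intro e he
  induction e using Sym2.ind with
  | _ x y =>
    have hxy := (adj_of_mem_edges G he).ne
    have hle : ({x, y} : Finset V).card ≤ Fintype.card V := by
      rw [← Finset.card_univ]
      exact Finset.card_le_card (Finset.subset_univ _)
    rw [card_insert_of_notMem (by simp [hxy]), card_singleton] at hle
    omega

lemma sdiff_endpoints_card {e : Sym2 V} (he : e ∈ edges G) :
    (univ \ endpoints e).card = Fintype.card V - 2 := by
  rw [Finset.card_sdiff_of_subset (Finset.subset_univ _), Finset.card_univ, card_endpoints G he]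

lemma S1_high (h : Fintype.card V < 3) : S1 G = 0 := by
  refine Finset.sum_eq_zero fun e he => ?_
  refine esymmF_eq_zero G ?_
  rw [sdiff_endpoints_card G he]
  omega

lemma S2_high (h : Fintype.card V < 4) : S2 G = 0 := by
  refine Finset.sum_eq_zero fun e he => ?_
  refine esymmF_eq_zero G ?_
  rw [sdiff_endpoints_card G he]
  omega

lemma phi2_high (h : Fintype.card V < 4) : phi2 G = 0 := by
  rw [phi2, Finset.card_eq_zero, Finset.eq_empty_iff_forall_notMem]
  intro M hM
  simp only [Finset.mem_filter] at hM
  have h4 : (covered M).card = 4 := by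
    rw [card_covered G hM.1, hM.2]
  have hle : (covered M).card ≤ Fintype.card V := by
    rw [← Finset.card_univ]
    exact Finset.card_le_card (Finset.subset_univ _)
  omega

lemma esymm_roots_one : (LM ℂ G).roots.esymm 1 = esymmF G univ 1 := by
  by_cases h : 1 ≤ Fintype.card V
  · rw [esymm_roots G h, coeff_LM_one G h]
    ring
  · rw [esymm_roots_high G (by omega), esymmF_univ_high G (by omega)]

lemma esymm_roots_two :
    (LM ℂ G).roots.esymm 2 = esymmF G univ 2 - ((edges G).card : ℂ) := by
  by_cases h : 2 ≤ Fintype.card V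
  · rw [esymm_roots G h, coeff_LM_two G h]
    norm_num
  · rw [esymm_roots_high G (by omega), esymmF_univ_high G (by omega),
      edges_eq_empty G (by omega)]
    simp

lemma esymm_roots_three :
    (LM ℂ G).roots.esymm 3 = esymmF G univ 3 - S1 G := by
  by_cases h : 3 ≤ Fintype.card V
  · rw [esymm_roots G h, coeff_LM_three G h]
    ring
  · rw [esymm_roots_high G (by omega), esymmF_univ_high G (by omega),
      S1_high G (by omega)]
    simp

lemma esymm_roots_four :
    (LM ℂ G).roots.esymm 4 = esymmF G univ 4 - S2 G + (phi2 G : ℂ) := by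
  by_cases h : 4 ≤ Fintype.card V
  · rw [esymm_roots G h, coeff_LM_four G h]
    norm_num
  · rw [esymm_roots_high G (by omega), esymmF_univ_high G (by omega),
      S2_high G (by omega), phi2_high G (by omega)]
    simp

/-! ### Power sums via elementary symmetric functions -/

lemma esymm_zero' (s : Multiset ℂ) : s.esymm 0 = 1 := by
  simp [Multiset.esymm, Multiset.powersetCard_zero_left]

lemma esymm_succ_cons (a : ℂ) (s : Multiset ℂ) (k : ℕ) :
    (a ::ₘ s).esymm (k + 1) = s.esymm (k + 1) + a * s.esymm k := by
  rw [Multiset.esymm, Multiset.powersetCard_cons, Multiset.map_add, Multiset.sum_add]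
  congr 1
  rw [Multiset.map_map, Multiset.esymm, ← Multiset.sum_map_mul_left]
  refine congr_arg _ (Multiset.map_congr rfl fun t _ => ?_)
  simp [Multiset.prod_cons]

lemma psum4_multiset (s : Multiset ℂ) :
    (s.map (fun x => x ^ 4)).sum =
      (s.esymm 1) ^ 4 - 4 * (s.esymm 1) ^ 2 * (s.esymm 2) + 2 * (s.esymm 2) ^ 2
        + 4 * (s.esymm 1) * (s.esymm 3) - 4 * (s.esymm 4) := by
  induction s using Multiset.induction with
  | empty =>
    have h : ∀ k : ℕ, (0 : Multiset ℂ).esymm (k + 1) = 0 := by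
      intro k
      simp [Multiset.esymm, Multiset.powersetCard_zero_right]
    simp [h 0, h 1, h 2, h 3]
  | cons a s ih =>
    have e1 := esymm_succ_cons a s 0
    have e2 := esymm_succ_cons a s 1
    have e3 := esymm_succ_cons a s 2
    have e4 := esymm_succ_cons a s 3
    norm_num at e1 e2 e3 e4
    rw [Multiset.map_cons, Multiset.sum_cons, ih, e1, e2, e3, e4, esymm_zero']
    ring

/-! ### Handshake-type identities -/

/-- The set of ordered adjacent pairs. -/
noncomputable def P : Finset (V × V) := (univ : Finset (V × V)).filter fun p => G.Adj p.1 p.2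

lemma adj_of_mem_P {p : V × V} (hp : p ∈ P G) : G.Adj p.1 p.2 := by
  simpa [P] using hp

lemma fiber_card {e : Sym2 V} (he : e ∈ edges G) :
    ((P G).filter fun p => s(p.1, p.2) = e).card = 2 := by
  induction e using Sym2.ind with
  | _ x y =>
    have hadj := adj_of_mem_edges G he
    have hne := hadj.ne
    have hset : ((P G).filter fun p => s(p.1, p.2) = s(x, y))
        = {(x, y), (y, x)} := by
      ext p
      rcases p with ⟨a, b⟩
      simp only [P, Finset.mem_filter, Finset.mem_univ, true_and, Sym2.eq_iff,
        Finset.mem_insert, Finset.mem_singleton, Prod.mk.injEq]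
      constructor
      · rintro ⟨_, (⟨rfl, rfl⟩ | ⟨rfl, rfl⟩)⟩
        · exact Or.inl ⟨rfl, rfl⟩
        · exact Or.inr ⟨rfl, rfl⟩
      · rintro (⟨rfl, rfl⟩ | ⟨rfl, rfl⟩)
        · exact ⟨hadj, Or.inl ⟨rfl, rfl⟩⟩
        · exact ⟨hadj.symm, Or.inr ⟨rfl, rfl⟩⟩
    rw [hset, card_insert_of_notMem (by simp [hne]), card_singleton]

lemma master (F : Sym2 V → ℂ) :
    ∑ p ∈ P G, F (s(p.1, p.2)) = 2 * ∑ e ∈ edges G, F e := by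
  have hmap : ∀ p ∈ P G, s(p.1, p.2) ∈ edges G := by
    intro p hp
    rw [mem_edges, SimpleGraph.mem_edgeSet]
    exact adj_of_mem_P G hp
  rw [← Finset.sum_fiberwise_of_maps_to hmap (fun p => F (s(p.1, p.2)))]
  rw [Finset.mul_sum]
  refine Finset.sum_congr rfl fun e he => ?_
  rw [Finset.sum_congr rfl (fun p hp => by rw [(Finset.mem_filter.1 hp).2]),
    Finset.sum_const, fiber_card G he]
  rw [nsmul_eq_mul]
  norm_num

lemma sum_P_swap (H : V × V → ℂ) : ∑ p ∈ P G, H p = ∑ p ∈ P G, H (p.2, p.1) := by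
  refine Finset.sum_nbij' (fun p => (p.2, p.1)) (fun p => (p.2, p.1)) ?_ ?_ ?_ ?_ ?_
  · intro p hp
    simp only [P, Finset.mem_filter, Finset.mem_univ, true_and] at hp ⊢
    exact hp.symm
  · intro p hp
    simp only [P, Finset.mem_filter, Finset.mem_univ, true_and] at hp ⊢
    exact hp.symm
  · intro p _; rfl
  · intro p _; rfl
  · intro p _; rfl

lemma sum_P (H : V × V → ℂ) :
    ∑ p ∈ P G, H p = ∑ x : V, ∑ y ∈ univ.filter (fun y => G.Adj x y), H (x, y) := by
  rw [P, Finset.sum_filter, Fintype.sum_prod_type]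
  refine Finset.sum_congr rfl fun x _ => ?_
  rw [Finset.sum_filter]

lemma edge_sum_f (f : V → ℂ) :
    ∑ e ∈ edges G, (∑ v ∈ endpoints e, f v) = ∑ x : V, (deg G x : ℂ) * f x := by
  have key := master G (fun e => ∑ v ∈ endpoints e, f v)
  have h1 : ∀ p ∈ P G, (∑ v ∈ endpoints (s(p.1, p.2)), f v) = f p.1 + f p.2 := by
    intro p hp
    have hadj := adj_of_mem_P G hp
    rw [endpoints_mk, Finset.sum_insert (by simp [hadj.ne]), Finset.sum_singleton]
  rw [Finset.sum_congr rfl h1, Finset.sum_add_distrib] at key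
  have h2 : ∑ p ∈ P G, f p.2 = ∑ p ∈ P G, f p.1 := by
    rw [sum_P_swap G (fun p => f p.2)]
  rw [h2, ← two_mul] at key
  have h3 : ∑ p ∈ P G, f p.1 = ∑ x : V, (deg G x : ℂ) * f x := by
    rw [sum_P G (fun p => f p.1)]
    refine Finset.sum_congr rfl fun x _ => ?_
    have hrfl : ∑ y ∈ univ.filter (fun y => G.Adj x y), f (x, y).1
        = ∑ _y ∈ univ.filter (fun y => G.Adj x y), f x := rfl
    rw [hrfl, Finset.sum_const, deg, nsmul_eq_mul]
  rw [h3] at key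
  exact (mul_left_cancel₀ (two_ne_zero) key).symm

lemma sum_deg_eq : ∑ x : V, (deg G x : ℂ) = 2 * ((edges G).card : ℂ) := by
  have h := edge_sum_f G (fun _ => 1)
  simp only [mul_one] at h
  rw [← h]
  have : ∀ e ∈ edges G, (∑ _v ∈ endpoints e, (1 : ℂ)) = 2 := by
    intro e he
    rw [Finset.sum_const, card_endpoints G he]
    norm_num
  rw [Finset.sum_congr rfl this, Finset.sum_const, nsmul_eq_mul]
  ring

lemma edge_sum_q2 :
    ∑ e ∈ edges G, (∑ v ∈ endpoints e, (deg G v : ℂ)) = ∑ x : V, (deg G x : ℂ) ^ 2 := by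
  rw [edge_sum_f G (fun v => (deg G v : ℂ))]
  exact Finset.sum_congr rfl fun x _ => (pow_two _).symm

lemma edge_sum_q3 :
    ∑ e ∈ edges G, (∑ v ∈ endpoints e, (deg G v : ℂ) ^ 2) = ∑ x : V, (deg G x : ℂ) ^ 3 := by
  rw [edge_sum_f G (fun v => (deg G v : ℂ) ^ 2)]
  exact Finset.sum_congr rfl fun x _ => by ring

lemma edge_sum_B :
    ∑ e ∈ edges G, (∏ v ∈ endpoints e, (deg G v : ℂ)) = (B G : ℂ) := by
  rw [B, Nat.cast_sum]
  refine Finset.sum_congr rfl fun e => Sym2.ind (fun x y he => ?_) e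
  have hne := (adj_of_mem_edges G he).ne
  rw [endpoints_mk, Finset.prod_insert (by simp [hne]), Finset.prod_singleton, Sym2.lift_mk]
  push_cast
  ring

lemma endpoints_sq {e : Sym2 V} (he : e ∈ edges G) :
    (∑ v ∈ endpoints e, (deg G v : ℂ)) ^ 2
      = (∑ v ∈ endpoints e, (deg G v : ℂ) ^ 2) + 2 * ∏ v ∈ endpoints e, (deg G v : ℂ) := by
  induction e using Sym2.ind with
  | _ x y =>
    have hne := (adj_of_mem_edges G he).ne
    rw [endpoints_mk, Finset.sum_insert (by simp [hne]), Finset.sum_singleton,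
      Finset.sum_insert (by simp [hne]), Finset.sum_singleton,
      Finset.prod_insert (by simp [hne]), Finset.prod_singleton]
    ring

lemma S1_val :
    S1 G = ((edges G).card : ℂ) * (∑ v : V, (deg G v : ℂ)) - ∑ v : V, (deg G v : ℂ) ^ 2 := by
  have h1 : ∀ e ∈ edges G, esymmF G (univ \ endpoints e) 1
      = (∑ v : V, (deg G v : ℂ)) - (∑ v ∈ endpoints e, (deg G v : ℂ)) := by
    intro e _
    rw [esymmF_one, Finset.sum_sdiff_eq_sub (Finset.subset_univ _)]
  rw [S1, Finset.sum_congr rfl h1, Finset.sum_sub_distrib, Finset.sum_const,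
    nsmul_eq_mul, edge_sum_q2 G]

lemma S2_val :
    2 * S2 G = ((edges G).card : ℂ) *
        ((∑ v : V, (deg G v : ℂ)) ^ 2 - ∑ v : V, (deg G v : ℂ) ^ 2)
      - 2 * (∑ v : V, (deg G v : ℂ)) * (∑ v : V, (deg G v : ℂ) ^ 2)
      + 2 * (∑ v : V, (deg G v : ℂ) ^ 3) + 2 * (B G : ℂ) := by
  have h1 : ∀ e ∈ edges G, 2 * esymmF G (univ \ endpoints e) 2
      = ((∑ v : V, (deg G v : ℂ)) ^ 2 - ∑ v : V, (deg G v : ℂ) ^ 2)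
        - 2 * (∑ v : V, (deg G v : ℂ)) * (∑ v ∈ endpoints e, (deg G v : ℂ))
        + 2 * (∑ v ∈ endpoints e, (deg G v : ℂ) ^ 2)
        + 2 * (∏ v ∈ endpoints e, (deg G v : ℂ)) := by
    intro e he
    rw [two_mul_esymmF_two, Finset.sum_sdiff_eq_sub (Finset.subset_univ _),
      Finset.sum_sdiff_eq_sub (Finset.subset_univ _)]
    linear_combination endpoints_sq G he
  rw [S2, Finset.mul_sum, Finset.sum_congr rfl h1]
  rw [Finset.sum_add_distrib, Finset.sum_add_distrib, Finset.sum_sub_distrib,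
    Finset.sum_const, nsmul_eq_mul, ← Finset.mul_sum, ← Finset.mul_sum, ← Finset.mul_sum,
    edge_sum_q2 G, edge_sum_q3 G, edge_sum_B G]

/-! ### Counting `2`-matchings -/

/-- Disjointness predicate for a pair of edges. -/
def Dis (p : Sym2 V × Sym2 V) : Prop := ∀ x ∈ p.1, x ∉ p.2

lemma dis_card :
    (((edges G).offDiag).filter (fun p => Dis p)).card = 2 * phi2 G := by
  have hmaps : ∀ p ∈ ((edges G).offDiag).filter (fun p => Dis p),
      ({p.1, p.2} : Finset (Sym2 V)) ∈ (matchings G).filter fun M => M.card = 2 := by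
    intro p hp
    simp only [Finset.mem_filter, Finset.mem_offDiag] at hp
    obtain ⟨⟨he1, he2, hne⟩, hdis⟩ := hp
    simp only [Finset.mem_filter]
    constructor
    · rw [mem_matchings]
      constructor
      · intro f hf
        simp only [Finset.coe_insert, Finset.coe_singleton, Set.mem_insert_iff,
          Set.mem_singleton_iff] at hf
        rcases hf with rfl | rfl
        · exact (mem_edges G).1 he1
        · exact (mem_edges G).1 he2
      · intro a ha b hb hab x hx
        simp only [Finset.mem_insert, Finset.mem_singleton] at ha hb
        rcases ha with rfl | rfl <;> rcases hb with rfl | rfl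
        · exact absurd rfl hab
        · exact hdis x hx
        · intro hx2
          exact hdis x hx2 hx
        · exact absurd rfl hab
    · rw [card_insert_of_notMem (by simpa using hne), card_singleton]
  rw [Finset.card_eq_sum_card_fiberwise hmaps]
  have hfib : ∀ M ∈ (matchings G).filter (fun M => M.card = 2),
      ((((edges G).offDiag).filter (fun p => Dis p)).filter
        (fun p => ({p.1, p.2} : Finset (Sym2 V)) = M)).card = 2 := by
    intro M hM
    simp only [Finset.mem_filter] at hM
    obtain ⟨hMm, hc⟩ := hM
    obtain ⟨e, f, hef, rfl⟩ := Finset.card_eq_two.1 hc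
    have he : e ∈ edges G := edges_of_mem_matchings G hMm (by simp)
    have hf : f ∈ edges G := edges_of_mem_matchings G hMm (by simp)
    have hm := (mem_matchings G).1 hMm
    have hdef : Dis (e, f) := hm.2 e (by simp) f (by simp) hef
    have hdfe : Dis (f, e) := hm.2 f (by simp) e (by simp) hef.symm
    have hset : ((((edges G).offDiag).filter (fun p => Dis p)).filter
        (fun p => ({p.1, p.2} : Finset (Sym2 V)) = {e, f})) = {(e, f), (f, e)} := by
      ext p
      rcases p with ⟨a, b⟩
      simp only [Finset.mem_filter, Finset.mem_offDiag, Finset.mem_insert,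
        Finset.mem_singleton, Prod.mk.injEq]
      constructor
      · rintro ⟨⟨⟨ha, hb, hab⟩, _⟩, hpair⟩
        have haef : a ∈ ({e, f} : Finset (Sym2 V)) := by
          rw [← hpair]; simp
        have hbef : b ∈ ({e, f} : Finset (Sym2 V)) := by
          rw [← hpair]; simp
        simp only [Finset.mem_insert, Finset.mem_singleton] at haef hbef
        rcases haef with rfl | rfl <;> rcases hbef with rfl | rfl
        · exact absurd rfl hab
        · exact Or.inl ⟨rfl, rfl⟩
        · exact Or.inr ⟨rfl, rfl⟩
        · exact absurd rfl hab
      · rintro (⟨rfl, rfl⟩ | ⟨rfl, rfl⟩)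
        · exact ⟨⟨⟨he, hf, hef⟩, hdef⟩, rfl⟩
        · exact ⟨⟨⟨hf, he, hef.symm⟩, hdfe⟩, Finset.pair_comm _ _⟩
    rw [hset, card_insert_of_notMem (by simp [hef]), card_singleton]
  rw [Finset.sum_congr rfl hfib, Finset.sum_const, smul_eq_mul, phi2, mul_comm]

lemma ndis_card :
    (((edges G).offDiag).filter (fun p => ¬ Dis p)).card
      = ∑ v : V, ((univ.filter (G.Adj v)).offDiag).card := by
  rw [← Finset.card_sigma]
  refine (Finset.card_bij (fun a _ => (s(a.1, a.2.1), s(a.1, a.2.2))) ?_ ?_ ?_).symm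
  · rintro ⟨v, a, b⟩ hx
    simp only [Finset.mem_sigma, Finset.mem_univ, Finset.mem_offDiag, true_and,
      Finset.mem_filter] at hx
    obtain ⟨hva, hvb, hab⟩ := hx
    simp only [Finset.mem_filter, Finset.mem_offDiag]
    refine ⟨⟨?_, ?_, ?_⟩, ?_⟩
    · exact (mem_edges G).2 (G.mem_edgeSet.2 hva)
    · exact (mem_edges G).2 (G.mem_edgeSet.2 hvb)
    · intro hcon
      rw [Sym2.eq_iff] at hcon
      rcases hcon with ⟨_, h2⟩ | ⟨h1, h2⟩
      · exact hab h2
      · exact hva.ne h2.symm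
    · intro hdis
      exact hdis v (Sym2.mem_mk_left v a) (Sym2.mem_mk_left v b)
  · rintro ⟨v, a, b⟩ hx ⟨w, c, d⟩ hy heq
    simp only [Finset.mem_sigma, Finset.mem_univ, Finset.mem_offDiag, true_and,
      Finset.mem_filter] at hx hy
    obtain ⟨hva, hvb, hab⟩ := hx
    obtain ⟨hwc, hwd, hcd⟩ := hy
    simp only [Prod.mk.injEq, Sym2.eq_iff] at heq
    obtain ⟨h1, h2⟩ := heq
    have hva' := hva.ne
    have hvb' := hvb.ne
    rcases h1 with ⟨h5, h6⟩ | ⟨h5, h6⟩ <;> rcases h2 with ⟨h3, h4⟩ | ⟨h3, h4⟩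
    · subst h5; subst h6; subst h4; rfl
    · exact absurd (h5.trans h4.symm) hvb'
    · exact absurd (h3.trans h6.symm) hva'
    · exact absurd (h6.trans h4.symm) hab
  · rintro ⟨e, f⟩ hq
    simp only [Finset.mem_filter, Finset.mem_offDiag] at hq
    obtain ⟨⟨he, hf, hef⟩, hnd⟩ := hq
    rw [Dis] at hnd
    push_neg at hnd
    obtain ⟨x, hxe, hxf⟩ := hnd
    obtain ⟨a, rfl⟩ := Sym2.mem_iff_exists.1 hxe
    obtain ⟨b, rfl⟩ := Sym2.mem_iff_exists.1 hxf
    have hxa : G.Adj x a := G.mem_edgeSet.1 ((mem_edges G).1 he)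
    have hxb : G.Adj x b := G.mem_edgeSet.1 ((mem_edges G).1 hf)
    have hab : a ≠ b := fun h => hef (by rw [h])
    refine ⟨⟨x, a, b⟩, ?_, rfl⟩
    simp only [Finset.mem_sigma, Finset.mem_univ, Finset.mem_offDiag, true_and,
      Finset.mem_filter]
    exact ⟨hxa, hxb, hab⟩

lemma le_sq (k : ℕ) : k ≤ k * k := by
  rcases Nat.eq_zero_or_pos k with h | h
  · simp [h]
  · exact Nat.le_mul_of_pos_left k h

lemma phi2_nat :
    2 * phi2 G + (∑ v : V, deg G v * deg G v) + (edges G).card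
      = (edges G).card * (edges G).card + ∑ v : V, deg G v := by
  have h0 := Finset.card_filter_add_card_filter_not
    (s := (edges G).offDiag) (p := fun p => Dis p)
  rw [dis_card G, ndis_card G, Finset.offDiag_card] at h0
  have hsum : ∀ v : V, ((univ.filter (G.Adj v)).offDiag).card = deg G v * deg G v - deg G v := by
    intro v
    rw [Finset.offDiag_card]
    rfl
  rw [Finset.sum_congr rfl fun v _ => hsum v] at h0
  have hsum2 : (∑ v : V, (deg G v * deg G v - deg G v)) + ∑ v : V, deg G v
      = ∑ v : V, deg G v * deg G v := by
    rw [← Finset.sum_add_distrib]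
    exact Finset.sum_congr rfl fun v _ => Nat.sub_add_cancel (le_sq _)
  have hm := le_sq (edges G).card
  omega

/-! ### Putting everything together -/

lemma deg_psum4 :
    ∑ v : V, (deg G v : ℂ) ^ 4 =
      (esymmF G univ 1) ^ 4 - 4 * (esymmF G univ 1) ^ 2 * (esymmF G univ 2)
        + 2 * (esymmF G univ 2) ^ 2 + 4 * (esymmF G univ 1) * (esymmF G univ 3)
        - 4 * (esymmF G univ 4) := by
  have h := psum4_multiset ((univ : Finset V).val.map (fun v => (deg G v : ℂ)))
  have hmap : ∀ k, ((univ : Finset V).val.map (fun v => (deg G v : ℂ))).esymm k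
      = esymmF G univ k := by
    intro k
    rw [Finset.esymm_map_val]
    rfl
  rw [Multiset.map_map, hmap, hmap, hmap, hmap] at h
  rw [← h]
  rfl

lemma esymmF_univ_one : esymmF G univ 1 = ∑ v : V, (deg G v : ℂ) := esymmF_one G univ

end Aux

/-- `p_4(G) = A_4 + 4 A_3 + 2 A_2 + 4 B - 2 |E(G)|`. -/
theorem p4_identity [Fintype V] (G : SimpleGraph V) :
    psum G 4 = (A G 4 : ℂ) + 4 * (A G 3 : ℂ) + 2 * (A G 2 : ℂ) + 4 * (B G : ℂ)
      - 2 * ((edges G).card : ℂ) := by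
  have hp := psum4_multiset (LM ℂ G).roots
  rw [esymm_roots_one G, esymm_roots_two G, esymm_roots_three G, esymm_roots_four G,
    esymmF_univ_one G] at hp
  have h7 := deg_psum4 G
  rw [esymmF_univ_one G] at h7
  have h2 := two_mul_esymmF_two G univ
  have h3 := S1_val G
  have h4 := S2_val G
  have h6 := sum_deg_eq G
  have h5 : 2 * (phi2 G : ℂ)
      = ((edges G).card : ℂ) ^ 2 - ((edges G).card : ℂ)
        - (∑ v : V, (deg G v : ℂ) ^ 2) + ∑ v : V, (deg G v : ℂ) := by
    have hc := congrArg (fun k : ℕ => (k : ℂ)) (phi2_nat G)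
    push_cast at hc
    have hq : ∑ v : V, ((deg G v : ℂ) * (deg G v : ℂ)) = ∑ v : V, (deg G v : ℂ) ^ 2 :=
      Finset.sum_congr rfl fun v _ => (pow_two _).symm
    rw [hq] at hc
    linear_combination hc
  have hA4 : (A G 4 : ℂ) = ∑ v : V, (deg G v : ℂ) ^ 4 := by
    rw [A]; push_cast; rfl
  have hA3 : (A G 3 : ℂ) = ∑ v : V, (deg G v : ℂ) ^ 3 := by
    rw [A]; push_cast; rfl
  have hA2 : (A G 2 : ℂ) = ∑ v : V, (deg G v : ℂ) ^ 2 := by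
    rw [A]; push_cast; rfl
  have hgoal : psum G 4 = ((LM ℂ G).roots.map (fun x => x ^ 4)).sum := rfl
  rw [hgoal, hA4, hA3, hA2]
  linear_combination hp - h7 + (-2 * ((edges G).card : ℂ)) * h2
    + (-4 * (∑ v : V, (deg G v : ℂ))) * h3 + 2 * h4 + (-2 : ℂ) * h5 + (-2 : ℂ) * h6

end LMRIV
end

section
/- Let G be a finite simple graph with m edges. Then Σ_{M∈M_2(G)} Σ_{z∈V(M)} d_G(z) = (m+1)·A_2(G) − A_3(G) − 2·B(G), where M_2(G) is the set of 2-matchings of G; equivalently, Σ_{xy∈E(G)} (d_G(x)+d_G(y))·(m − d_G(x) − d_G(y) + 1) = (m+1)·A_2(G) − A_3(G) − 2·B(G). -/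
open Polynomial Finset

namespace LMRIV

open scoped Classical

variable {V : Type*}

section Aux

variable [Fintype V]

lemma edges_eq (G : SimpleGraph V) : edges G = G.edgeFinset := by
  ext e; simp [edges, SimpleGraph.mem_edgeFinset]

lemma deg_eq (G : SimpleGraph V) (v : V) : deg G v = G.degree v := by
  rw [deg, SimpleGraph.degree]
  congr 1
  ext w
  simp [SimpleGraph.mem_neighborFinset]

/-- symmetric lift of `w x + w y`. -/
noncomputable def addLift (w : V → ℤ) : Sym2 V → ℤ :=
  Sym2.lift ⟨fun x y => w x + w y, fun x y => add_comm _ _⟩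

@[simp] lemma addLift_mk (w : V → ℤ) (x y : V) : addLift w s(x, y) = w x + w y := rfl

/-- Weighted handshake lemma. -/
lemma sum_addLift (G : SimpleGraph V) (w : V → ℤ) :
    ∑ e ∈ edges G, addLift w e = ∑ v, (deg G v : ℤ) * w v := by
  classical
  have h1 : (∑ d : G.Dart, w d.fst) = ∑ v, (deg G v : ℤ) * w v := by
    rw [← Finset.sum_fiberwise_of_maps_to (g := fun d : G.Dart => d.fst)
      (fun d _ => Finset.mem_univ d.fst)]
    refine Finset.sum_congr rfl fun v _ => ?_
    rw [Finset.sum_congr rfl (fun d hd => ?_), Finset.sum_const,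
      G.dart_fst_fiber_card_eq_degree, deg_eq, nsmul_eq_mul]
    · rw [(Finset.mem_filter.mp hd).2]
  have h2 : (∑ d : G.Dart, w d.fst) = ∑ e ∈ edges G, addLift w e := by
    rw [← Finset.sum_fiberwise_of_maps_to (g := fun d : G.Dart => d.edge)
      (t := edges G) (fun d _ => by simp [edges_eq, SimpleGraph.mem_edgeFinset])]
    refine Finset.sum_congr rfl fun e he => ?_
    rw [edges_eq, SimpleGraph.mem_edgeFinset] at he
    induction e with
    | _ x y =>
      let d : G.Dart := ⟨(x, y), he⟩
      have hfib : (Finset.univ.filter fun d' : G.Dart => d'.edge = s(x, y)) =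
          {d, d.symm} := by
        have := d.edge_fiber
        exact this
      rw [hfib, Finset.sum_pair d.symm_ne.symm]
      simp [d.edge_mem]
      rfl
  rw [← h2, h1]

lemma B_cast (G : SimpleGraph V) :
    (B G : ℤ) = ∑ e ∈ edges G,
      Sym2.lift ⟨fun x y => (deg G x : ℤ) * deg G y, fun x y => mul_comm _ _⟩ e := by
  rw [B, Nat.cast_sum]
  refine Finset.sum_congr rfl fun e _ => ?_
  induction e with
  | _ x y => simp

/-- The second (edge-sum) form of the identity. -/
lemma part2 (G : SimpleGraph V) :
    (∑ e ∈ edges G,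
        Sym2.lift ⟨fun x y => ((deg G x : ℤ) + (deg G y : ℤ)) *
            (((edges G).card : ℤ) - (deg G x : ℤ) - (deg G y : ℤ) + 1),
          fun x y => by ring⟩ e) =
      (((edges G).card : ℤ) + 1) * (A G 2 : ℤ) - (A G 3 : ℤ) - 2 * (B G : ℤ) := by
  classical
  set m : ℤ := ((edges G).card : ℤ)
  have key : ∀ e ∈ edges G,
      Sym2.lift ⟨fun x y => ((deg G x : ℤ) + (deg G y : ℤ)) *
          (m - (deg G x : ℤ) - (deg G y : ℤ) + 1), fun x y => by ring⟩ e =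
        (m + 1) * addLift (fun v => (deg G v : ℤ)) e
          - addLift (fun v => (deg G v : ℤ) ^ 2) e
          - 2 * Sym2.lift ⟨fun x y => (deg G x : ℤ) * deg G y,
              fun x y => mul_comm _ _⟩ e := by
    intro e _
    induction e with
    | _ x y => simp; ring
  rw [Finset.sum_congr rfl key]
  rw [Finset.sum_sub_distrib, Finset.sum_sub_distrib, ← Finset.mul_sum, ← Finset.mul_sum,
    sum_addLift, sum_addLift, ← B_cast]
  have hA2 : (A G 2 : ℤ) = ∑ v, (deg G v : ℤ) * (deg G v : ℤ) := by
    rw [A, Nat.cast_sum]; exact Finset.sum_congr rfl fun v _ => by push_cast; ring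
  have hA3 : (A G 3 : ℤ) = ∑ v, (deg G v : ℤ) * (deg G v : ℤ) ^ 2 := by
    rw [A, Nat.cast_sum]; exact Finset.sum_congr rfl fun v _ => by push_cast; ring
  rw [← hA2, ← hA3]

/-- Counting edges disjoint from a given edge. -/
lemma count_disjoint (G : SimpleGraph V) {x y : V} (h : s(x, y) ∈ G.edgeSet) :
    ((edges G).filter fun f => ∀ z : V, z ∈ s(x, y) → z ∉ f).card
      + deg G x + deg G y = (edges G).card + 1 := by
  classical
  have hxy : x ≠ y := ((SimpleGraph.mem_edgeSet G).mp h).ne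
  have hsplit := Finset.card_filter_add_card_filter_not
    (s := edges G) (p := fun f => ∀ z : V, z ∈ s(x, y) → z ∉ f)
  have hneg : (edges G).filter (fun f => ¬ ∀ z : V, z ∈ s(x, y) → z ∉ f) =
      ((edges G).filter fun f => x ∈ f) ∪ ((edges G).filter fun f => y ∈ f) := by
    ext f
    simp only [Finset.mem_filter, Finset.mem_union, not_forall]
    constructor
    · rintro ⟨hf, z, hz, hzf⟩
      rw [not_not] at hzf
      rw [Sym2.mem_iff] at hz
      rcases hz with rfl | rfl
      · exact Or.inl ⟨hf, hzf⟩
      · exact Or.inr ⟨hf, hzf⟩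
    · rintro (⟨hf, hxf⟩ | ⟨hf, hyf⟩)
      · exact ⟨hf, x, by simp, by simpa using hxf⟩
      · exact ⟨hf, y, by simp, by simpa using hyf⟩
  have hcx : ((edges G).filter fun f => x ∈ f).card = deg G x := by
    rw [edges_eq, deg_eq, ← SimpleGraph.card_incidenceFinset_eq_degree]
    congr 1
    rw [SimpleGraph.incidenceFinset_eq_filter]
  have hcy : ((edges G).filter fun f => y ∈ f).card = deg G y := by
    rw [edges_eq, deg_eq, ← SimpleGraph.card_incidenceFinset_eq_degree]
    congr 1
    rw [SimpleGraph.incidenceFinset_eq_filter]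
  have hinter : ((edges G).filter fun f => x ∈ f) ∩ ((edges G).filter fun f => y ∈ f)
      = {s(x, y)} := by
    ext f
    simp only [Finset.mem_inter, Finset.mem_filter, Finset.mem_singleton]
    constructor
    · rintro ⟨⟨_, hxf⟩, ⟨_, hyf⟩⟩
      exact (Sym2.mem_and_mem_iff hxy).mp ⟨hxf, hyf⟩
    · rintro rfl
      refine ⟨⟨?_, by simp⟩, ⟨?_, by simp⟩⟩ <;> simp [edges, h]
  have hunion := Finset.card_union_add_card_inter
    ((edges G).filter fun f => x ∈ f) ((edges G).filter fun f => y ∈ f)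
  rw [hinter, Finset.card_singleton, hcx, hcy] at hunion
  rw [hneg] at hsplit
  omega

/-- Sum of a weight over the covered vertices of a matching. -/
lemma covered_sum (G : SimpleGraph V) (M : Finset (Sym2 V)) (hM : IsMatching G M)
    (w : V → ℤ) : ∑ z ∈ covered M, w z = ∑ e ∈ M, addLift w e := by
  classical
  have hcov : covered M = M.biUnion fun e => Finset.univ.filter (· ∈ e) := by
    ext z
    simp [covered]
  rw [hcov, Finset.sum_biUnion]
  · refine Finset.sum_congr rfl fun e he => ?_
    have heS : e ∈ G.edgeSet := hM.1 he
    induction e with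
    | _ x y =>
      have hxy : x ≠ y := ((SimpleGraph.mem_edgeSet G).mp heS).ne
      have : (Finset.univ.filter (· ∈ s(x, y))) = ({x, y} : Finset V) := by
        ext z; simp [Sym2.mem_iff]
      rw [this, Finset.sum_pair hxy]
      simp
  · intro e he f hf hef
    simp only [Finset.disjoint_left, Finset.mem_filter, Finset.mem_univ, true_and]
    intro z hze hzf
    exact hM.2 e he f hf hef z hze hzf

end Aux

/-- `Σ_{M ∈ M_2(G)} Σ_{z ∈ V(M)} d_G(z) = (m+1) A_2 - A_3 - 2B`; equivalently,
`Σ_{xy ∈ E(G)} (d(x)+d(y))(m - d(x) - d(y) + 1) = (m+1) A_2 - A_3 - 2B`. -/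
theorem two_matching_degree_sum [Fintype V] (G : SimpleGraph V) :
    (∑ M ∈ (matchings G).filter (fun M => M.card = 2),
        ∑ z ∈ covered M, (deg G z : ℤ)) =
      (((edges G).card : ℤ) + 1) * (A G 2 : ℤ) - (A G 3 : ℤ) - 2 * (B G : ℤ) ∧
    (∑ e ∈ edges G,
        Sym2.lift ⟨fun x y => ((deg G x : ℤ) + (deg G y : ℤ)) *
            (((edges G).card : ℤ) - (deg G x : ℤ) - (deg G y : ℤ) + 1),
          fun x y => by ring⟩ e) =
      (((edges G).card : ℤ) + 1) * (A G 2 : ℤ) - (A G 3 : ℤ) - 2 * (B G : ℤ) := by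
  classical
  have h2 := part2 G
  refine ⟨?_, h2⟩
  rw [← h2]
  set D : Sym2 V → ℤ := addLift (fun v => (deg G v : ℤ)) with hD
  set P : Finset (Sym2 V × Sym2 V) :=
    ((edges G) ×ˢ (edges G)).filter (fun p => ∀ z : V, z ∈ p.1 → z ∉ p.2) with hP
  -- membership facts about P
  have memP : ∀ p : Sym2 V × Sym2 V, p ∈ P ↔
      p.1 ∈ G.edgeSet ∧ p.2 ∈ G.edgeSet ∧ ∀ z : V, z ∈ p.1 → z ∉ p.2 := by
    intro p
    simp [hP, Finset.mem_filter, Finset.mem_product, edges, and_assoc]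
  have ne_of_P : ∀ p : Sym2 V × Sym2 V, p ∈ P → p.1 ≠ p.2 := by
    intro p hp
    obtain ⟨h1, h2', hdisj⟩ := (memP p).mp hp
    intro hEq
    have hex : ∃ a, a ∈ p.1 := by
      induction p.1 with
      | _ a b => exact ⟨a, by simp⟩
    obtain ⟨a, ha⟩ := hex
    exact hdisj a ha (hEq ▸ ha)
  -- Step 1: matching sum = sum over ordered pairs
  have step1 : (∑ M ∈ (matchings G).filter (fun M => M.card = 2),
      ∑ z ∈ covered M, (deg G z : ℤ)) = ∑ p ∈ P, D p.1 := by
    rw [← Finset.sum_fiberwise_of_maps_to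
      (g := fun p : Sym2 V × Sym2 V => ({p.1, p.2} : Finset (Sym2 V)))
      (t := (matchings G).filter (fun M => M.card = 2)) ?_]
    · refine Finset.sum_congr rfl fun M hM => ?_
      rw [Finset.mem_filter] at hM
      obtain ⟨hMm, hc2⟩ := hM
      have hmatch : IsMatching G M := by
        simpa [matchings] using hMm
      obtain ⟨e, f, hef, rfl⟩ := Finset.card_eq_two.mp hc2
      have heE : e ∈ G.edgeSet := hmatch.1 (by simp)
      have hfE : f ∈ G.edgeSet := hmatch.1 (by simp)
      have hd1 : ∀ z : V, z ∈ e → z ∉ f := hmatch.2 e (by simp) f (by simp) hef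
      have hd2 : ∀ z : V, z ∈ f → z ∉ e := hmatch.2 f (by simp) e (by simp) hef.symm
      have hfib : P.filter (fun p => ({p.1, p.2} : Finset (Sym2 V)) = {e, f}) =
          ({(e, f), (f, e)} : Finset (Sym2 V × Sym2 V)) := by
        ext p
        simp only [Finset.mem_filter, Finset.mem_insert, Finset.mem_singleton]
        constructor
        · rintro ⟨hp, hpair⟩
          have hne := ne_of_P p hp
          have h1 : p.1 = e ∨ p.1 = f := by
            have : p.1 ∈ ({e, f} : Finset (Sym2 V)) := hpair ▸ (by simp)
            simpa using this
          have h2' : p.2 = e ∨ p.2 = f := by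
            have : p.2 ∈ ({e, f} : Finset (Sym2 V)) := hpair ▸ (by simp)
            simpa using this
          rcases h1 with h1 | h1 <;> rcases h2' with h2'' | h2''
          · exact absurd (h1.trans h2''.symm) hne
          · exact Or.inl (Prod.ext h1 h2'')
          · exact Or.inr (Prod.ext h1 h2'')
          · exact absurd (h1.trans h2''.symm) hne
        · rintro (rfl | rfl)
          · exact ⟨(memP _).mpr ⟨heE, hfE, hd1⟩, rfl⟩
          · refine ⟨(memP _).mpr ⟨hfE, heE, hd2⟩, ?_⟩
            simp [Finset.pair_comm]
      rw [hfib, Finset.sum_pair (by simp [hef, Prod.ext_iff] : (e, f) ≠ (f, e))]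
      rw [covered_sum G _ hmatch, Finset.sum_pair hef]
    · intro p hp
      obtain ⟨h1, h2', hdisj⟩ := (memP p).mp hp
      have hne := ne_of_P p hp
      rw [Finset.mem_filter]
      constructor
      · simp only [matchings, Finset.mem_filter, Finset.mem_univ, true_and]
        refine ⟨?_, ?_⟩
        · intro g hg
          simp only [Finset.coe_insert, Finset.coe_singleton, Set.mem_insert_iff,
            Set.mem_singleton_iff] at hg
          rcases hg with rfl | rfl <;> assumption
        · intro a ha b hb hab z hza
          simp only [Finset.mem_insert, Finset.mem_singleton] at ha hb
          rcases ha with rfl | rfl <;> rcases hb with rfl | rfl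
          · exact absurd rfl hab
          · exact hdisj z hza
          · intro hzb; exact hdisj z hzb hza
          · exact absurd rfl hab
      · exact Finset.card_pair hne
  -- Step 2: sum over ordered pairs = edge sum
  have step2 : (∑ p ∈ P, D p.1) = ∑ e ∈ edges G,
      Sym2.lift ⟨fun x y => ((deg G x : ℤ) + (deg G y : ℤ)) *
          (((edges G).card : ℤ) - (deg G x : ℤ) - (deg G y : ℤ) + 1),
        fun x y => by ring⟩ e := by
    rw [hP, Finset.sum_filter, Finset.sum_product]
    refine Finset.sum_congr rfl fun e he => ?_
    have heS : e ∈ G.edgeSet := by simpa [edges] using he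
    induction e with
    | _ x y =>
      have hmid : (∑ f ∈ edges G, if (∀ z : V, z ∈ s(x, y) → z ∉ f)
          then D s(x, y) else 0)
          = Sym2.lift ⟨fun x y => ((deg G x : ℤ) + (deg G y : ℤ)) *
              (((edges G).card : ℤ) - (deg G x : ℤ) - (deg G y : ℤ) + 1),
            fun x y => by ring⟩ s(x, y) := ?_
      · exact Eq.trans (Finset.sum_congr rfl fun f _ => rfl) hmid
      rw [← Finset.sum_filter, Finset.sum_const, nsmul_eq_mul]
      have hcount := count_disjoint G heS
      have hcast : ((Finset.filter (fun f => ∀ z : V, z ∈ s(x, y) → z ∉ f)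
          (edges G)).card : ℤ) = ((edges G).card : ℤ) + 1 - deg G x - deg G y := by
        omega
      rw [hcast, Sym2.lift_mk, hD, addLift_mk]
      ring
  rw [step1, step2]

end LMRIV
end
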